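/- Leakage capacity as the worst-case PML over all priors: For any mechanism P_{Y|X} between finite sets, the supremum over all full-support priors q on 𝒳 of the supremum over all y with q_Y(y) > 0 of ℓ_q(X→y) equals the leakage capacity C(P_{Y|X}), as an identity in [0, +∞]. -/

import Mathlib

open Finset

/-- A probability mass function on a finite type. -/
def IsPMF {α : Type*} [Fintype α] (p : α → ℝ) : Prop :=
  (∀ a, 0 ≤ p a) ∧ ∑ a, p a = 1

/-- Maximum value of a function on a finite nonempty type. -/
noncomputable def maxVal {α : Type*} [Fintype α] [Nonempty α] (p : α → ℝ) : ℝ :=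
  Finset.univ.sup' Finset.univ_nonempty p

/-- Minimum value of a function on a finite nonempty type. -/
noncomputable def minVal {α : Type*} [Fintype α] [Nonempty α] (p : α → ℝ) : ℝ :=
  Finset.univ.inf' Finset.univ_nonempty p

/-- Min-entropy `H_∞(p) = -log (max_a p a)`. -/
noncomputable def minEntropy {α : Type*} [Fintype α] [Nonempty α] (p : α → ℝ) : ℝ :=
  - Real.log (maxVal p)

/-- Output marginal `q_Y(y) = ∑ x, p_{Y|X=x}(y) q(x)`. -/
noncomputable def outMarginal {𝒳 𝒴 : Type*} [Fintype 𝒳] (P : 𝒳 → 𝒴 → ℝ)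
    (q : 𝒳 → ℝ) (y : 𝒴) : ℝ :=
  ∑ x, P x y * q x

/-- Posterior on `𝒳` given outcome `y`. -/
noncomputable def posteriorX {𝒳 𝒴 : Type*} [Fintype 𝒳] (P : 𝒳 → 𝒴 → ℝ)
    (q : 𝒳 → ℝ) (y : 𝒴) (x : 𝒳) : ℝ :=
  P x y * q x / outMarginal P q y

/-- Prior of the attribute `U` induced by the kernel `PU` and the prior `q`. -/
noncomputable def attrPrior {𝒳 𝒰 : Type*} [Fintype 𝒳] (PU : 𝒳 → 𝒰 → ℝ)
    (q : 𝒳 → ℝ) (u : 𝒰) : ℝ :=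
  ∑ x, PU x u * q x

/-- Posterior of the attribute `U` given outcome `y`. -/
noncomputable def posteriorU {𝒳 𝒴 𝒰 : Type*} [Fintype 𝒳] (P : 𝒳 → 𝒴 → ℝ)
    (PU : 𝒳 → 𝒰 → ℝ) (q : 𝒳 → ℝ) (y : 𝒴) (u : 𝒰) : ℝ :=
  ∑ x, PU x u * posteriorX P q y x

/-- Pointwise maximal leakage `ℓ_q(X → y) = log (max_x p_{Y|X=x}(y) / q_Y(y))`. -/
noncomputable def pml {𝒳 𝒴 : Type*} [Fintype 𝒳] [Nonempty 𝒳] (P : 𝒳 → 𝒴 → ℝ)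
    (q : 𝒳 → ℝ) (y : 𝒴) : ℝ :=
  Real.log (maxVal (fun x => P x y) / outMarginal P q y)

/-- The mechanism `P` discloses the attribute `U` (given by `PU`) to the prior `q`:
there is an outcome `y` with positive marginal whose posterior on `U` has zero min-entropy. -/
def Discloses {𝒳 𝒴 𝒰 : Type*} [Fintype 𝒳] [Fintype 𝒰] [Nonempty 𝒰]
    (P : 𝒳 → 𝒴 → ℝ) (PU : 𝒳 → 𝒰 → ℝ) (q : 𝒳 → ℝ) : Prop :=
  ∃ y, 0 < outMarginal P q y ∧ minEntropy (posteriorU P PU q y) = 0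

/-- The mechanism `P` satisfies `(ε, q)`-PML. -/
def SatisfiesPML {𝒳 𝒴 : Type*} [Fintype 𝒳] [Nonempty 𝒳] (P : 𝒳 → 𝒴 → ℝ)
    (q : 𝒳 → ℝ) (ε : ℝ) : Prop :=
  ∀ y, 0 < outMarginal P q y → pml P q y ≤ ε

/- **Leakage capacity as worst-case PML.** The supremum, over all full-support priors `q`
and all outcomes `y` with positive marginal, of the pointwise maximal leakage
`ℓ_q(X → y)` equals the leakage capacity
`C(P_{Y|X}) = log max_{y, x, x'} p_{Y|X=x}(y) / p_{Y|X=x'}(y)` (with value `⊤` when some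
ratio has positive numerator and zero denominator), as an identity in `[0, +∞]` (stated
in the extended reals). -/
section Aux

variable {𝒳 𝒴 : Type*} [Fintype 𝒳] [Nonempty 𝒳]

lemma le_maxVal (p : 𝒳 → ℝ) (x : 𝒳) : p x ≤ maxVal p :=
  Finset.le_sup' p (Finset.mem_univ x)

lemma exists_eq_maxVal (p : 𝒳 → ℝ) : ∃ x, maxVal p = p x := by
  obtain ⟨x, -, hx⟩ := Finset.exists_mem_eq_sup' Finset.univ_nonempty p
  exact ⟨x, hx⟩

lemma minVal_le (p : 𝒳 → ℝ) (x : 𝒳) : minVal p ≤ p x :=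
  Finset.inf'_le p (Finset.mem_univ x)

lemma exists_eq_minVal (p : 𝒳 → ℝ) : ∃ x, minVal p = p x := by
  obtain ⟨x, -, hx⟩ := Finset.exists_mem_eq_inf' Finset.univ_nonempty p
  exact ⟨x, hx⟩

variable (P : 𝒳 → 𝒴 → ℝ)

lemma outMarginal_le_maxVal {q : 𝒳 → ℝ} (hq : IsPMF q) (y : 𝒴) :
    outMarginal P q y ≤ maxVal (fun x => P x y) := by
  calc outMarginal P q y = ∑ x, P x y * q x := rfl
    _ ≤ ∑ x, maxVal (fun x => P x y) * q x := by
        apply Finset.sum_le_sum; intro i _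
        exact mul_le_mul_of_nonneg_right (le_maxVal (fun x => P x y) i) (hq.1 i)
    _ = maxVal (fun x => P x y) := by rw [← Finset.mul_sum, hq.2, mul_one]

lemma minVal_le_outMarginal {q : 𝒳 → ℝ} (hq : IsPMF q) (y : 𝒴) :
    minVal (fun x => P x y) ≤ outMarginal P q y := by
  calc minVal (fun x => P x y) = ∑ x, minVal (fun x => P x y) * q x := by
        rw [← Finset.mul_sum, hq.2, mul_one]
    _ ≤ ∑ x, P x y * q x := by
        apply Finset.sum_le_sum; intro i _
        exact mul_le_mul_of_nonneg_right (minVal_le (fun x => P x y) i) (hq.1 i)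
    _ = outMarginal P q y := rfl

lemma single_le_outMarginal (hP : ∀ x, ∀ y, 0 ≤ P x y) {q : 𝒳 → ℝ}
    (hq0 : ∀ x, 0 ≤ q x) (x : 𝒳) (y : 𝒴) :
    P x y * q x ≤ outMarginal P q y :=
  Finset.single_le_sum (fun i _ => mul_nonneg (hP i y) (hq0 i)) (Finset.mem_univ x)

lemma pml_nonneg {q : 𝒳 → ℝ} (hq : IsPMF q) {y : 𝒴}
    (hy : 0 < outMarginal P q y) : 0 ≤ pml P q y := by
  apply Real.log_nonneg
  rw [le_div_iff₀ hy, one_mul]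
  exact outMarginal_le_maxVal P hq y

lemma sum_ite_const [DecidableEq 𝒳] (x' : 𝒳) (a b : ℝ) :
    ∑ z : 𝒳, (if z = x' then a else b) = a + ((Fintype.card 𝒳 : ℝ) - 1) * b := by
  have h : ∀ z : 𝒳, (if z = x' then a else b) = b + (if z = x' then a - b else 0) := by
    intro z; split <;> ring
  simp_rw [h, Finset.sum_add_distrib, Finset.sum_const, Finset.sum_ite_eq' Finset.univ x'
    (fun _ => a - b), Finset.mem_univ, if_pos, Finset.card_univ, nsmul_eq_mul]
  ring

end Aux


open scoped Classical in
theorem leakage_capacity_eq_worst_case_pml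
    {𝒳 𝒴 : Type*} [Fintype 𝒳] [Fintype 𝒴] [Nonempty 𝒳] [Nonempty 𝒴]
    (P : 𝒳 → 𝒴 → ℝ) (hP : ∀ x, IsPMF (P x)) :
    (⨆ q : {q : 𝒳 → ℝ // IsPMF q ∧ ∀ x, 0 < q x},
      ⨆ y : {y : 𝒴 // 0 < outMarginal P q.1 y},
        ((pml P q.1 y.1 : ℝ) : EReal)) =
    ⨆ (y : 𝒴) (x : 𝒳) (x' : 𝒳),
      (if P x' y = 0 ∧ 0 < P x y then (⊤ : EReal)
       else ((Real.log (P x y / P x' y) : ℝ) : EReal)) := by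
  classical
  have hP01 : ∀ x y, 0 ≤ P x y := fun x y => (hP x).1 y
  have hPle1 : ∀ x y, P x y ≤ 1 := by
    intro x y
    calc P x y ≤ ∑ y', P x y' :=
          Finset.single_le_sum (fun i _ => (hP x).1 i) (Finset.mem_univ y)
      _ = 1 := (hP x).2
  have hcard : 0 < (Fintype.card 𝒳 : ℝ) := by
    exact_mod_cast Fintype.card_pos
  -- the LHS supremum is nonnegative
  have h0 : (0 : EReal) ≤ ⨆ q : {q : 𝒳 → ℝ // IsPMF q ∧ ∀ x, 0 < q x},
      ⨆ y : {y : 𝒴 // 0 < outMarginal P q.1 y}, ((pml P q.1 y.1 : ℝ) : EReal) := by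
    set u : 𝒳 → ℝ := fun _ => (Fintype.card 𝒳 : ℝ)⁻¹ with hu_def
    have hupos : ∀ x, 0 < u x := fun x => by positivity
    have hu : IsPMF u := by
      refine ⟨fun a => (hupos a).le, ?_⟩
      simp only [hu_def, Finset.sum_const, Finset.card_univ, nsmul_eq_mul]
      field_simp
    have hsum : ∑ y, outMarginal P u y = 1 := by
      unfold outMarginal
      rw [Finset.sum_comm]
      have hrow : ∀ x : 𝒳, ∑ y, P x y * u x = u x := by
        intro x; rw [← Finset.sum_mul, (hP x).2, one_mul]
      rw [Finset.sum_congr rfl (fun x _ => hrow x)]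
      exact hu.2
    have hex : ∃ y0, 0 < outMarginal P u y0 := by
      by_contra h
      push_neg at h
      have : ∑ y, outMarginal P u y ≤ 0 := Finset.sum_nonpos (fun y _ => h y)
      linarith
    obtain ⟨y0, hy0⟩ := hex
    have hp := pml_nonneg P hu hy0
    have h1 : (0 : EReal) ≤ ((pml P u y0 : ℝ) : EReal) := by exact_mod_cast hp
    refine h1.trans ?_
    refine le_iSup_of_le ⟨u, hu, hupos⟩ ?_
    exact le_iSup_of_le ⟨y0, hy0⟩ le_rfl
  -- key unboundedness lemma via skewed priors
  have key : ∀ (c : ℝ) (y : 𝒴) (x x' : 𝒳), x ≠ x' → 0 < P x y →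
      P x' y < P x y * Real.exp (-c) →
      (c : EReal) < ⨆ q : {q : 𝒳 → ℝ // IsPMF q ∧ ∀ x, 0 < q x},
        ⨆ y : {y : 𝒴 // 0 < outMarginal P q.1 y}, ((pml P q.1 y.1 : ℝ) : EReal) := by
    intro c y x x' hne hx hlt
    have h2 : 1 < Fintype.card 𝒳 := Fintype.one_lt_card_iff.2 ⟨x, x', hne⟩
    set n : ℝ := (Fintype.card 𝒳 : ℝ) with hn
    have hn2 : (1 : ℝ) < n := by rw [hn]; exact_mod_cast h2
    have hδ : 0 < P x y * Real.exp (-c) - P x' y := by linarith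
    set δ : ℝ := P x y * Real.exp (-c) - P x' y with hδ_def
    set ε : ℝ := min (δ / (2 * (n - 1))) n⁻¹ with hε_def
    have hε0 : 0 < ε := lt_min (div_pos hδ (by linarith)) (by positivity)
    have hεn : ε ≤ n⁻¹ := min_le_right _ _
    set q : 𝒳 → ℝ := fun z => if z = x' then 1 - (n - 1) * ε else ε with hq_def
    have hqx' : (n⁻¹ : ℝ) ≤ q x' := by
      have h1 : (n - 1) * ε ≤ (n - 1) * n⁻¹ :=
        mul_le_mul_of_nonneg_left hεn (by linarith)
      have h2' : 1 - (n - 1) * n⁻¹ = n⁻¹ := by field_simp; ring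
      simp only [hq_def, if_pos rfl]
      linarith
    have hqpos : ∀ z, 0 < q z := by
      intro z
      by_cases hz : z = x'
      · subst hz
        calc (0:ℝ) < n⁻¹ := by positivity
          _ ≤ q z := hqx'
      · simp only [hq_def, if_neg hz]
        exact hε0
    have hqsum : ∑ z, q z = 1 := by
      simp only [hq_def]
      rw [sum_ite_const, ← hn]
      ring
    have hqpmf : IsPMF q := ⟨fun z => (hqpos z).le, hqsum⟩
    have hmar_le : outMarginal P q y ≤ P x' y + (n - 1) * ε := by
      calc outMarginal P q y = ∑ z, P z y * q z := rfl
        _ ≤ ∑ z, (if z = x' then P x' y else ε) := by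
            apply Finset.sum_le_sum
            intro z _
            by_cases hz : z = x'
            · subst hz
              simp only [hq_def, if_pos rfl]
              have h1 : 1 - (n - 1) * ε ≤ 1 := by nlinarith
              exact mul_le_of_le_one_right (hP01 z y) h1
            · simp only [hq_def, if_neg hz]
              exact mul_le_of_le_one_left hε0.le (hPle1 z y)
        _ = P x' y + (n - 1) * ε := by rw [sum_ite_const, ← hn]
    have hmar_lt : outMarginal P q y < P x y * Real.exp (-c) := by
      have h1 : (n - 1) * ε ≤ (n - 1) * (δ / (2 * (n - 1))) :=
        mul_le_mul_of_nonneg_left (min_le_left _ _) (by linarith)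
      have h2' : (n - 1) * (δ / (2 * (n - 1))) = δ / 2 := by
        rw [mul_comm 2 (n - 1), ← mul_div_assoc,
          mul_div_mul_left _ _ (ne_of_gt (by linarith : (0:ℝ) < n - 1))]
      have h3 : outMarginal P q y ≤ P x' y + δ / 2 := by linarith
      have h4 : P x' y + δ = P x y * Real.exp (-c) := by rw [hδ_def]; ring
      linarith
    have hmar_pos : 0 < outMarginal P q y :=
      lt_of_lt_of_le (mul_pos hx (hqpos x))
        (single_le_outMarginal P hP01 (fun z => (hqpos z).le) x y)
    have hpml : c < pml P q y := by
      have hMx : P x y ≤ maxVal (fun z => P z y) := le_maxVal (fun z => P z y) x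
      have h3 : Real.exp c < maxVal (fun z => P z y) / outMarginal P q y := by
        have he : Real.exp c = P x y / (P x y * Real.exp (-c)) := by
          rw [Real.exp_neg]
          field_simp
        rw [he]
        calc P x y / (P x y * Real.exp (-c)) < P x y / outMarginal P q y :=
              div_lt_div_of_pos_left hx hmar_pos hmar_lt
          _ ≤ maxVal (fun z => P z y) / outMarginal P q y := by gcongr
      calc c = Real.log (Real.exp c) := (Real.log_exp c).symm
        _ < pml P q y := Real.log_lt_log (Real.exp_pos c) h3
    have hfin : (c : EReal) < ((pml P q y : ℝ) : EReal) := EReal.coe_lt_coe_iff.2 hpml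
    refine hfin.trans_le ?_
    refine le_iSup_of_le ⟨q, hqpmf, hqpos⟩ ?_
    exact le_iSup_of_le ⟨y, hmar_pos⟩ le_rfl
  apply le_antisymm
  · -- LHS ≤ RHS
    refine iSup_le fun q => iSup_le fun y => ?_
    obtain ⟨hqpmf, hqpos⟩ := q.2
    have hy := y.2
    obtain ⟨xM, hxM⟩ := exists_eq_maxVal (fun x => P x y.1)
    obtain ⟨xm, hxm⟩ := exists_eq_minVal (fun x => P x y.1)
    have hMy : outMarginal P q.1 y.1 ≤ P xM y.1 := hxM ▸ outMarginal_le_maxVal P hqpmf y.1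
    have hmy : P xm y.1 ≤ outMarginal P q.1 y.1 := hxm ▸ minVal_le_outMarginal P hqpmf y.1
    have hMpos : 0 < P xM y.1 := lt_of_lt_of_le hy hMy
    by_cases hm : P xm y.1 = 0
    · refine le_top.trans (le_iSup_of_le y.1 (le_iSup_of_le xM (le_iSup_of_le xm ?_)))
      rw [if_pos ⟨hm, hMpos⟩]
    · have hmpos : 0 < P xm y.1 := lt_of_le_of_ne (hP01 xm y.1) (Ne.symm hm)
      have hpml : pml P q.1 y.1 ≤ Real.log (P xM y.1 / P xm y.1) := by
        unfold pml
        rw [hxM]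
        apply Real.log_le_log (by positivity)
        gcongr
      refine le_iSup_of_le y.1 (le_iSup_of_le xM (le_iSup_of_le xm ?_))
      rw [if_neg (fun h => hm h.1)]
      exact EReal.coe_le_coe_iff.2 hpml
  · -- RHS ≤ LHS
    refine iSup_le fun y => iSup_le fun x => iSup_le fun x' => ?_
    split_ifs with h
    · rw [top_le_iff]
      by_contra hne
      have hLbot : (⨆ q : {q : 𝒳 → ℝ // IsPMF q ∧ ∀ x, 0 < q x},
          ⨆ y : {y : 𝒴 // 0 < outMarginal P q.1 y}, ((pml P q.1 y.1 : ℝ) : EReal)) ≠ ⊥ :=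
        (lt_of_lt_of_le (by norm_num : (⊥ : EReal) < 0) h0).ne'
      have hxx' : x ≠ x' := by
        rintro rfl
        exact absurd (h.1 ▸ h.2) (lt_irrefl 0)
      have hk := key (EReal.toReal (⨆ q : {q : 𝒳 → ℝ // IsPMF q ∧ ∀ x, 0 < q x},
          ⨆ y : {y : 𝒴 // 0 < outMarginal P q.1 y}, ((pml P q.1 y.1 : ℝ) : EReal)))
        y x x' hxx' h.2 (by rw [h.1]; exact mul_pos h.2 (Real.exp_pos _))
      rw [EReal.coe_toReal hne hLbot] at hk
      exact lt_irrefl _ hk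
    · by_cases hx : 0 < P x y
      · have hx'0 : P x' y ≠ 0 := fun hx'0 => h ⟨hx'0, hx⟩
        have hx' : 0 < P x' y := lt_of_le_of_ne (hP01 x' y) (Ne.symm hx'0)
        set t : ℝ := Real.log (P x y / P x' y) with ht_def
        by_cases ht : t ≤ 0
        · calc ((t : ℝ) : EReal) ≤ ((0 : ℝ) : EReal) := EReal.coe_le_coe_iff.2 ht
            _ = (0 : EReal) := by norm_num
            _ ≤ _ := h0
        · push_neg at ht
          have hne' : x ≠ x' := by
            rintro rfl
            rw [ht_def, div_self (ne_of_gt hx), Real.log_one] at ht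
            exact lt_irrefl _ ht
          by_contra hcon
          push_neg at hcon
          have hLtop : (⨆ q : {q : 𝒳 → ℝ // IsPMF q ∧ ∀ x, 0 < q x},
              ⨆ y : {y : 𝒴 // 0 < outMarginal P q.1 y}, ((pml P q.1 y.1 : ℝ) : EReal)) ≠ ⊤ :=
            (hcon.trans (EReal.coe_lt_top t)).ne
          have hLbot : (⨆ q : {q : 𝒳 → ℝ // IsPMF q ∧ ∀ x, 0 < q x},
              ⨆ y : {y : 𝒴 // 0 < outMarginal P q.1 y}, ((pml P q.1 y.1 : ℝ) : EReal)) ≠ ⊥ :=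
            (lt_of_lt_of_le (by norm_num : (⊥ : EReal) < 0) h0).ne'
          set r : ℝ := EReal.toReal (⨆ q : {q : 𝒳 → ℝ // IsPMF q ∧ ∀ x, 0 < q x},
              ⨆ y : {y : 𝒴 // 0 < outMarginal P q.1 y}, ((pml P q.1 y.1 : ℝ) : EReal)) with hr_def
          have hr : ((r : ℝ) : EReal) = ⨆ q : {q : 𝒳 → ℝ // IsPMF q ∧ ∀ x, 0 < q x},
              ⨆ y : {y : 𝒴 // 0 < outMarginal P q.1 y}, ((pml P q.1 y.1 : ℝ) : EReal) :=
            EReal.coe_toReal hLtop hLbot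
          have hrt : r < t := by
            rw [← hr] at hcon
            exact_mod_cast hcon
          have hkey_hyp : P x' y < P x y * Real.exp (-r) := by
            have h1 : Real.exp r < P x y / P x' y := by
              have h2 := Real.exp_lt_exp.2 hrt
              rwa [ht_def, Real.exp_log (by positivity)] at h2
            rw [lt_div_iff₀ hx'] at h1
            rw [Real.exp_neg, ← div_eq_mul_inv, lt_div_iff₀ (Real.exp_pos r)]
            linarith
          have hk := key r y x x' hne' hx hkey_hyp
          rw [hr] at hk
          exact lt_irrefl _ hk
      · have hx0 : P x y = 0 := le_antisymm (not_lt.1 hx) (hP01 x y)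
        rw [hx0, zero_div, Real.log_zero]
        calc ((0 : ℝ) : EReal) = (0 : EReal) := by norm_num
          _ ≤ _ := h0
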